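/- Let p ∈ (2,∞), and A ∈ ℂ^{d×d} satisfy σ_p · ‖Im(A)‖ < λ(A), where σ_p = (p−2)/(2√(p−1)), ‖Im(A)‖ is the operator norm of the imaginary part of A, and λ(A) := min_{|ξ|=1} Re(Aξ·conj ξ) > 0. If θ ∈ (0, π/2 − ω(A)) satisfies tan(θ) < (λ(A) − σ_p‖Im(A)‖)/(λ(A)·tan(ω(A)) + σ_p‖Re(A)‖), then σ_p · ‖Im(e^{iθ}A)‖ < λ(e^{iθ}A). -/

import Mathlib

open Matrix

/-- `λ(A)`: the ellipticity constant, minimum over unit vectors `ξ` of `Re(Aξ · conj ξ)`. -/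
noncomputable def lamConst {d : ℕ} (A : Matrix (Fin d) (Fin d) ℂ) : ℝ :=
  sInf { r : ℝ | ∃ ξ : Fin d → ℂ, (∑ i, Complex.normSq (ξ i)) = 1 ∧
    r = (A.mulVec ξ ⬝ᵥ star ξ).re }

/-- `Δ_p(A)`: the `p`-ellipticity constant. -/
noncomputable def DeltaConst {d : ℕ} (p : ℝ) (A : Matrix (Fin d) (Fin d) ℂ) : ℝ :=
  sInf { r : ℝ | ∃ ξ : Fin d → ℂ, (∑ i, Complex.normSq (ξ i)) = 1 ∧
    r = (A.mulVec ξ ⬝ᵥ star (ξ + ((1 - 2/p : ℝ) : ℂ) • star ξ)).re }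

noncomputable def euclNorm {d : ℕ} (v : Fin d → ℂ) : ℝ :=
  Real.sqrt (∑ i, Complex.normSq (v i))

/-- `Λ(A)`: the operator norm of `A` on the Euclidean space `ℂ^d`. -/
noncomputable def opNorm {d : ℕ} (A : Matrix (Fin d) (Fin d) ℂ) : ℝ :=
  sSup { r : ℝ | ∃ ξ : Fin d → ℂ, (∑ i, Complex.normSq (ξ i)) = 1 ∧
    r = euclNorm (A.mulVec ξ) }

/-- `ω(A)`: the numerical range angle of `A`. -/
noncomputable def omegaConst {d : ℕ} (A : Matrix (Fin d) (Fin d) ℂ) : ℝ :=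
  sSup { r : ℝ | ∃ ξ : Fin d → ℂ, (∑ i, Complex.normSq (ξ i)) = 1 ∧
    r = |Complex.arg (A.mulVec ξ ⬝ᵥ star ξ)| }

/-- Entrywise real part of a complex matrix, as a complex matrix. -/
noncomputable def reMat {d : ℕ} (A : Matrix (Fin d) (Fin d) ℂ) : Matrix (Fin d) (Fin d) ℂ :=
  fun i j => ((A i j).re : ℂ)

/-- Entrywise imaginary part of a complex matrix, as a complex matrix. -/
noncomputable def imMat {d : ℕ} (A : Matrix (Fin d) (Fin d) ℂ) : Matrix (Fin d) (Fin d) ℂ :=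
  fun i j => ((A i j).im : ℂ)

noncomputable def sigma_p (p : ℝ) : ℝ := (p - 2) / (2 * Real.sqrt (p - 1))

/-! ### Auxiliary lemmas -/

noncomputable def eV {d : ℕ} (v : Fin d → ℂ) : EuclideanSpace ℂ (Fin d) :=
  (WithLp.equiv 2 _).symm v

lemma euclNorm_eq_norm {d : ℕ} (v : Fin d → ℂ) : euclNorm v = ‖eV v‖ := by
  rw [EuclideanSpace.norm_eq, euclNorm]
  congr 1
  refine Finset.sum_congr rfl fun i _ => ?_
  rw [Complex.sq_norm]
  rfl

lemma eV_unit {d : ℕ} {ξ : Fin d → ℂ} (hξ : (∑ i, Complex.normSq (ξ i)) = 1) :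
    ‖eV ξ‖ = 1 := by
  rw [← euclNorm_eq_norm, euclNorm, hξ, Real.sqrt_one]

lemma eV_mulVec {d : ℕ} (A : Matrix (Fin d) (Fin d) ℂ) (ξ : Fin d → ℂ) :
    eV (A.mulVec ξ) = Matrix.toEuclideanCLM (𝕜 := ℂ) A (eV ξ) := by
  rw [eV, eV, WithLp.equiv_symm_apply, Matrix.toEuclideanCLM_toLp]

lemma euclNorm_mulVec_le {d : ℕ} (A : Matrix (Fin d) (Fin d) ℂ) {ξ : Fin d → ℂ}
    (hξ : (∑ i, Complex.normSq (ξ i)) = 1) :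
    euclNorm (A.mulVec ξ) ≤ ‖Matrix.toEuclideanCLM (𝕜 := ℂ) A‖ := by
  rw [euclNorm_eq_norm, eV_mulVec]
  calc ‖Matrix.toEuclideanCLM (𝕜 := ℂ) A (eV ξ)‖
      ≤ ‖Matrix.toEuclideanCLM (𝕜 := ℂ) A‖ * ‖eV ξ‖ := ContinuousLinearMap.le_opNorm _ _
    _ = ‖Matrix.toEuclideanCLM (𝕜 := ℂ) A‖ := by rw [eV_unit hξ, mul_one]

lemma dot_eq_inner {d : ℕ} (A : Matrix (Fin d) (Fin d) ℂ) (ξ : Fin d → ℂ) :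
    A.mulVec ξ ⬝ᵥ star ξ = inner ℂ (eV ξ) (eV (A.mulVec ξ)) := by
  rw [show eV ξ = (WithLp.equiv 2 _).symm ξ from rfl,
    show eV (A.mulVec ξ) = (WithLp.equiv 2 _).symm (A.mulVec ξ) from rfl,
    WithLp.equiv_symm_apply, EuclideanSpace.inner_toLp_toLp]

lemma abs_dot_le {d : ℕ} (A : Matrix (Fin d) (Fin d) ℂ) {ξ : Fin d → ℂ}
    (hξ : (∑ i, Complex.normSq (ξ i)) = 1) :
    ‖A.mulVec ξ ⬝ᵥ star ξ‖ ≤ ‖Matrix.toEuclideanCLM (𝕜 := ℂ) A‖ := by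
  rw [dot_eq_inner]
  calc ‖(inner ℂ (eV ξ) (eV (A.mulVec ξ)) : ℂ)‖ ≤ ‖eV ξ‖ * ‖eV (A.mulVec ξ)‖ :=
        norm_inner_le_norm _ _
    _ ≤ ‖Matrix.toEuclideanCLM (𝕜 := ℂ) A‖ := by
        rw [eV_unit hξ, one_mul, ← euclNorm_eq_norm]
        exact euclNorm_mulVec_le A hξ

lemma exists_unit {d : ℕ} (hd : 0 < d) : ∃ ξ : Fin d → ℂ, (∑ i, Complex.normSq (ξ i)) = 1 := by
  refine ⟨fun i => if i = ⟨0, hd⟩ then 1 else 0, ?_⟩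
  rw [Finset.sum_eq_single (⟨0, hd⟩ : Fin d)] <;> simp +contextual

lemma opNorm_nonneg' {d : ℕ} (M : Matrix (Fin d) (Fin d) ℂ) : 0 ≤ opNorm M := by
  apply Real.sSup_nonneg
  rintro r ⟨ξ, hξ, rfl⟩
  exact Real.sqrt_nonneg _

lemma euclNorm_le_opNorm {d : ℕ} (M : Matrix (Fin d) (Fin d) ℂ) {ξ : Fin d → ℂ}
    (hξ : (∑ i, Complex.normSq (ξ i)) = 1) : euclNorm (M.mulVec ξ) ≤ opNorm M := by
  apply le_csSup
  · exact ⟨‖Matrix.toEuclideanCLM (𝕜 := ℂ) M‖, by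
      rintro r ⟨ζ, hζ, rfl⟩; exact euclNorm_mulVec_le M hζ⟩
  · exact ⟨ξ, hξ, rfl⟩

set_option maxHeartbeats 2000000 in
theorem rotation_smallness_criterion {d : ℕ} (p : ℝ) (hp : 2 < p)
    (A : Matrix (Fin d) (Fin d) ℂ)
    (hlam : 0 < lamConst A)
    (hsmall : sigma_p p * opNorm (imMat A) < lamConst A)
    (θ : ℝ) (hθ : θ ∈ Set.Ioo 0 (Real.pi / 2 - omegaConst A))
    (htan : Real.tan θ <
      (lamConst A - sigma_p p * opNorm (imMat A)) /
        (lamConst A * Real.tan (omegaConst A) + sigma_p p * opNorm (reMat A))) :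
    sigma_p p * opNorm (imMat (Complex.exp (θ * Complex.I) • A)) <
      lamConst (Complex.exp (θ * Complex.I) • A) := by
  rcases Nat.eq_zero_or_pos d with hd0 | hd
  · exfalso
    subst hd0
    have : lamConst A = 0 := by
      have : { r : ℝ | ∃ ξ : Fin 0 → ℂ, (∑ i, Complex.normSq (ξ i)) = 1 ∧
          r = (A.mulVec ξ ⬝ᵥ star ξ).re } = ∅ := by
        ext r; simp
      rw [lamConst, this, Real.sInf_empty]
    linarith
  obtain ⟨θpos, θlt⟩ := hθ
  have hπ := Real.pi_pos
  set σ := sigma_p p with hσdef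
  set lam := lamConst A with hlamdef
  set Λi := opNorm (imMat A) with hΛidef
  set Λr := opNorm (reMat A) with hΛrdef
  set ω := omegaConst A with hωdef
  have hσ : 0 < σ := by
    rw [hσdef, sigma_p]
    apply div_pos (by linarith)
    have : 0 < Real.sqrt (p - 1) := Real.sqrt_pos.2 (by linarith)
    linarith
  -- ω facts
  have hωmem : ∀ ξ : Fin d → ℂ, (∑ i, Complex.normSq (ξ i)) = 1 →
      |Complex.arg (A.mulVec ξ ⬝ᵥ star ξ)| ≤ ω := by
    intro ξ hξ
    apply le_csSup
    · exact ⟨Real.pi, by rintro r ⟨ζ, hζ, rfl⟩; exact Complex.abs_arg_le_pi _⟩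
    · exact ⟨ξ, hξ, rfl⟩
  have hω0 : 0 ≤ ω := by
    obtain ⟨ξ, hξ⟩ := exists_unit hd
    exact le_trans (abs_nonneg _) (hωmem ξ hξ)
  have hωlt : ω < Real.pi / 2 := by linarith
  -- lam facts
  have hlamle : ∀ ξ : Fin d → ℂ, (∑ i, Complex.normSq (ξ i)) = 1 →
      lam ≤ (A.mulVec ξ ⬝ᵥ star ξ).re := by
    intro ξ hξ
    apply csInf_le
    · refine ⟨-‖Matrix.toEuclideanCLM (𝕜 := ℂ) A‖, ?_⟩
      rintro r ⟨ζ, hζ, rfl⟩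
      have h1 := abs_dot_le A hζ
      have h2 := Complex.abs_re_le_norm (A.mulVec ζ ⬝ᵥ star ζ)
      have h3 := neg_abs_le ((A.mulVec ζ ⬝ᵥ star ζ).re)
      linarith
    · exact ⟨ξ, hξ, rfl⟩
  -- imaginary part bound
  have him : ∀ ξ : Fin d → ℂ, (∑ i, Complex.normSq (ξ i)) = 1 →
      |(A.mulVec ξ ⬝ᵥ star ξ).im| ≤ (A.mulVec ξ ⬝ᵥ star ξ).re * Real.tan ω := by
    intro ξ hξ
    set z := A.mulVec ξ ⬝ᵥ star ξ with hz
    have hre : 0 < z.re := lt_of_lt_of_le hlam (hlamle ξ hξ)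
    have harg : |Complex.arg z| ≤ ω := hωmem ξ hξ
    have h1 : Real.tan |Complex.arg z| ≤ Real.tan ω := by
      rcases eq_or_lt_of_le harg with h | h
      · rw [h]
      · exact le_of_lt (Real.tan_lt_tan_of_nonneg_of_lt_pi_div_two (abs_nonneg _) hωlt h)
    have htn : 0 ≤ Real.tan |Complex.arg z| :=
      Real.tan_nonneg_of_nonneg_of_le_pi_div_two (abs_nonneg _)
        (le_of_lt (lt_of_le_of_lt harg hωlt))
    have h2 : |Real.tan (Complex.arg z)| = Real.tan |Complex.arg z| := by
      rcases le_or_gt 0 (Complex.arg z) with h | h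
      · rw [abs_of_nonneg h] at htn ⊢
        exact abs_of_nonneg htn
      · rw [abs_of_neg h] at htn ⊢
        rw [Real.tan_neg] at htn ⊢
        exact abs_of_nonpos (by linarith)
    have h3 : |z.im / z.re| ≤ Real.tan ω := by
      rw [← Complex.tan_arg, h2]; exact h1
    rw [abs_div, abs_of_pos hre] at h3
    calc |z.im| = |z.im| / z.re * z.re := by field_simp
      _ ≤ Real.tan ω * z.re := mul_le_mul_of_nonneg_right h3 hre.le
      _ = z.re * Real.tan ω := mul_comm _ _
  -- trig facts
  have hθπ : θ < Real.pi / 2 := by linarith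
  have hc : 0 < Real.cos θ := Real.cos_pos_of_mem_Ioo ⟨by linarith, hθπ⟩
  have hs : 0 < Real.sin θ := Real.sin_pos_of_pos_of_lt_pi θpos (by linarith)
  have htω : 0 ≤ Real.tan ω :=
    Real.tan_nonneg_of_nonneg_of_le_pi_div_two hω0 hωlt.le
  have hcω : 0 < Real.cos ω := Real.cos_pos_of_mem_Ioo ⟨by linarith, hωlt⟩
  have hcst : Real.sin θ * Real.tan ω ≤ Real.cos θ := by
    have hadd : 0 ≤ Real.cos (θ + ω) :=
      (Real.cos_pos_of_mem_Ioo ⟨by linarith, by linarith⟩).le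
    rw [Real.cos_add] at hadd
    rw [Real.tan_eq_sin_div_cos]
    have hrw : Real.sin θ * (Real.sin ω / Real.cos ω) =
        Real.sin θ * Real.sin ω / Real.cos ω := by ring
    rw [hrw, div_le_iff₀ hcω]
    nlinarith
  -- denominator positivity and key inequality
  have htanθ : 0 < Real.tan θ := Real.tan_pos_of_pos_of_lt_pi_div_two θpos hθπ
  have hN : 0 < lam - σ * Λi := by linarith
  have hD : 0 < lam * Real.tan ω + σ * Λr := by
    by_contra h
    push_neg at h
    have : (lam - σ * Λi) / (lam * Real.tan ω + σ * Λr) ≤ 0 :=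
      div_nonpos_of_nonneg_of_nonpos hN.le h
    linarith
  have hkey : Real.tan θ * (lam * Real.tan ω + σ * Λr) < lam - σ * Λi :=
    (lt_div_iff₀ hD).mp htan
  have hkey2 : Real.sin θ * (lam * Real.tan ω + σ * Λr) <
      Real.cos θ * (lam - σ * Λi) := by
    rw [Real.tan_eq_sin_div_cos, div_mul_eq_mul_div, div_lt_iff₀ hc] at hkey
    linarith [hkey]
  set e := Complex.exp (θ * Complex.I) with hedef
  have he_re : e.re = Real.cos θ := Complex.exp_ofReal_mul_I_re θ
  have he_im : e.im = Real.sin θ := Complex.exp_ofReal_mul_I_im θ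
  -- lower bound for lamConst (e • A)
  have hlamB : lam * (Real.cos θ - Real.sin θ * Real.tan ω) ≤ lamConst (e • A) := by
    apply le_csInf
    · obtain ⟨ξ, hξ⟩ := exists_unit hd
      exact ⟨_, ξ, hξ, rfl⟩
    · rintro r ⟨ξ, hξ, rfl⟩
      have hz := hlamle ξ hξ
      set z := A.mulVec ξ ⬝ᵥ star ξ with hzdef
      have him' := him ξ hξ
      have hmul : (e • A).mulVec ξ ⬝ᵥ star ξ = e * z := by
        rw [Matrix.smul_mulVec, smul_dotProduct, smul_eq_mul]
      rw [hmul]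
      have hrez : (e * z).re = Real.cos θ * z.re - Real.sin θ * z.im := by
        rw [Complex.mul_re, he_re, he_im]
      rw [hrez]
      have hre : 0 < z.re := lt_of_lt_of_le hlam hz
      have hcs : 0 ≤ Real.cos θ - Real.sin θ * Real.tan ω := by linarith
      nlinarith [mul_le_mul_of_nonneg_left (le_trans (le_abs_self z.im) him') hs.le,
        mul_le_mul_of_nonneg_right hz hcs]
  -- decomposition of imMat (e • A)
  have hBmat : imMat (e • A) =
      (Real.sin θ : ℂ) • reMat A + (Real.cos θ : ℂ) • imMat A := by
    ext i j
    simp only [imMat, reMat, Matrix.add_apply, Matrix.smul_apply, smul_eq_mul]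
    rw [Complex.mul_im, he_re, he_im]
    push_cast
    ring
  -- operator norm bound
  have hΛB : opNorm (imMat (e • A)) ≤ Real.sin θ * Λr + Real.cos θ * Λi := by
    apply Real.sSup_le
    · rintro r ⟨ξ, hξ, rfl⟩
      rw [hBmat]
      have hmv : ((Real.sin θ : ℂ) • reMat A + (Real.cos θ : ℂ) • imMat A).mulVec ξ =
          (Real.sin θ : ℂ) • (reMat A).mulVec ξ + (Real.cos θ : ℂ) • (imMat A).mulVec ξ := by
        rw [Matrix.add_mulVec, Matrix.smul_mulVec, Matrix.smul_mulVec]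
      rw [hmv, euclNorm_eq_norm]
      have heV : eV ((Real.sin θ : ℂ) • (reMat A).mulVec ξ +
          (Real.cos θ : ℂ) • (imMat A).mulVec ξ) =
          (Real.sin θ : ℂ) • eV ((reMat A).mulVec ξ) +
          (Real.cos θ : ℂ) • eV ((imMat A).mulVec ξ) := rfl
      rw [heV]
      calc ‖(Real.sin θ : ℂ) • eV ((reMat A).mulVec ξ) +
            (Real.cos θ : ℂ) • eV ((imMat A).mulVec ξ)‖
          ≤ ‖(Real.sin θ : ℂ) • eV ((reMat A).mulVec ξ)‖ +
            ‖(Real.cos θ : ℂ) • eV ((imMat A).mulVec ξ)‖ := norm_add_le _ _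
        _ = Real.sin θ * ‖eV ((reMat A).mulVec ξ)‖ +
            Real.cos θ * ‖eV ((imMat A).mulVec ξ)‖ := by
            rw [norm_smul, norm_smul, Complex.norm_real, Complex.norm_real,
              Real.norm_eq_abs, Real.norm_eq_abs, abs_of_pos hs, abs_of_pos hc]
        _ ≤ Real.sin θ * Λr + Real.cos θ * Λi := by
            have h1 := euclNorm_le_opNorm (reMat A) hξ
            have h2 := euclNorm_le_opNorm (imMat A) hξ
            rw [euclNorm_eq_norm] at h1 h2
            have := mul_le_mul_of_nonneg_left h1 hs.le
            have := mul_le_mul_of_nonneg_left h2 hc.le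
            linarith
    · exact add_nonneg (mul_nonneg hs.le (opNorm_nonneg' (reMat A)))
        (mul_nonneg hc.le (opNorm_nonneg' (imMat A)))
  calc σ * opNorm (imMat (e • A)) ≤ σ * (Real.sin θ * Λr + Real.cos θ * Λi) :=
        mul_le_mul_of_nonneg_left hΛB hσ.le
    _ < lam * (Real.cos θ - Real.sin θ * Real.tan ω) := by nlinarith [hkey2]
    _ ≤ lamConst (e • A) := hlamB
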